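/- (Theorem 1) For the general extrapolation formula y' = Σᵢ qᵢ yᵢ with yᵢ = (1-εᵢ + δᵢ)f, where E = (1-ε₁, 1-ε₂, …)ᵀ, K is the positive semi-definite covariance matrix K_{ij} = η^{-1}⟨δᵢδⱼ f²⟩ with diagonal entries Δᵢ², and η = ⟨f²⟩, the minimum over coefficient vectors Λ = (q₁, q₂, …)ᵀ of the RMSE √(η[(EᵀΛ - 1)² + ΛᵀKΛ]) is at most √(η EᵀKE)/‖E‖² ≤ √(η Σᵢ Δᵢ²)/‖E‖. -/

import Mathlib

open Matrix

lemma psd_diag_nonneg {m : ℕ} (K : Matrix (Fin m) (Fin m) ℝ) (hK : K.PosSemidef) (j : Fin m) :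
    0 ≤ K j j := by
  have h := hK.dotProduct_mulVec_nonneg (Pi.single j (1:ℝ))
  simpa [Matrix.mulVec, dotProduct, Pi.single_apply] using h

/-- Entries of a real PSD matrix are bounded by the diagonal. -/
lemma psd_entry_sq_le {m : ℕ} (K : Matrix (Fin m) (Fin m) ℝ) (hK : K.PosSemidef)
    (i j : Fin m) : (K i j) ^ 2 ≤ K i i * K j j := by
  rcases eq_or_ne i j with rfl | hij
  · rw [sq]
  have hsym : K j i = K i j := by
    have h := congrFun (congrFun hK.isHermitian j) i
    simpa [Matrix.conjTranspose_apply] using h.symm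
  have hq : ∀ t : ℝ, 0 ≤ K j j * (t * t) + (2 * K i j) * t + K i i := by
    intro t
    set x : Fin m → ℝ := fun k => (if k = i then 1 else 0) + t * (if k = j then 1 else 0) with hx
    have h := hK.dotProduct_mulVec_nonneg x
    simp only [RCLike.re_to_real, star_trivial] at h
    have hexp : x ⬝ᵥ K.mulVec x = K i i + t * K j i + t * K i j + t * (t * K j j) := by
      simp [hx, Matrix.mulVec, dotProduct, mul_add, add_mul, mul_ite, ite_mul,
        mul_one, mul_zero, one_mul, zero_mul, Finset.sum_add_distrib, Finset.mul_sum,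
        Finset.sum_ite_eq', hij, Ne.symm hij]
      ring
    rw [hexp, hsym] at h
    ring_nf at h ⊢
    linarith
  have hd := discrim_le_zero hq
  unfold discrim at hd
  nlinarith [hd]

/-- Theorem 1 of the paper. For the general extrapolation formula `y' = Σᵢ qᵢ yᵢ` with
`yᵢ = (1-εᵢ+δᵢ)f`, `E = (1-ε₁, 1-ε₂, …)ᵀ`, `K` the positive semi-definite covariance
matrix with diagonal `K_{ii} = Δᵢ²`, and `η = ⟨f²⟩ ≥ 0`, the minimum over coefficient
vectors `Λ` of the RMSE `√(η[(EᵀΛ-1)² + ΛᵀKΛ])` is at most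
`√(η EᵀKE)/‖E‖² ≤ √(η Σᵢ Δᵢ²)/‖E‖`. -/
theorem stmt_16 (m : ℕ) (η : ℝ) (hη : 0 ≤ η)
    (E Δ : Fin m → ℝ) (hE : E ≠ 0)
    (K : Matrix (Fin m) (Fin m) ℝ) (hK : K.PosSemidef) (hKd : ∀ i, K i i = (Δ i) ^ 2) :
    (∃ Λ : Fin m → ℝ,
        Real.sqrt (η * ((E ⬝ᵥ Λ - 1) ^ 2 + Λ ⬝ᵥ K.mulVec Λ))
          ≤ Real.sqrt (η * (E ⬝ᵥ K.mulVec E)) / Real.sqrt (∑ i, (E i) ^ 2) ^ 2)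
    ∧ Real.sqrt (η * (E ⬝ᵥ K.mulVec E)) / Real.sqrt (∑ i, (E i) ^ 2) ^ 2
        ≤ Real.sqrt (η * ∑ i, (Δ i) ^ 2) / Real.sqrt (∑ i, (E i) ^ 2) := by
  set c : ℝ := ∑ i, (E i) ^ 2 with hc_def
  have hc : 0 < c := by
    rcases Function.ne_iff.mp hE with ⟨i, hi⟩
    simp only [Pi.zero_apply] at hi
    have h1 : (0:ℝ) < (E i)^2 := by positivity
    exact lt_of_lt_of_le h1 (Finset.single_le_sum (fun j _ => sq_nonneg (E j)) (Finset.mem_univ i))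
  have hsc : Real.sqrt c ^ 2 = c := Real.sq_sqrt hc.le
  have hq : 0 ≤ E ⬝ᵥ K.mulVec E := by
    have h := hK.dotProduct_mulVec_nonneg E; simpa using h
  constructor
  · refine ⟨c⁻¹ • E, ?_⟩
    have h1 : E ⬝ᵥ (c⁻¹ • E) = 1 := by
      rw [dotProduct_smul]
      have hEE : E ⬝ᵥ E = c := by simp [dotProduct, hc_def, sq]
      rw [smul_eq_mul, hEE]; field_simp
    have h2 : (c⁻¹ • E) ⬝ᵥ K.mulVec (c⁻¹ • E) = c⁻¹ * (c⁻¹ * (E ⬝ᵥ K.mulVec E)) := by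
      rw [Matrix.mulVec_smul, dotProduct_smul, smul_dotProduct]
      simp [smul_eq_mul, mul_comm, mul_left_comm]
    rw [h1, h2, hsc]
    have h3 : η * ((1 - 1) ^ 2 + c⁻¹ * (c⁻¹ * (E ⬝ᵥ K.mulVec E)))
        = (η * (E ⬝ᵥ K.mulVec E)) * (c⁻¹)^2 := by ring
    rw [h3, Real.sqrt_mul (by positivity), Real.sqrt_sq (by positivity), div_eq_mul_inv]
  · have key : E ⬝ᵥ K.mulVec E ≤ (∑ i, (Δ i)^2) * c := by
      have h1 : E ⬝ᵥ K.mulVec E ≤ ∑ i, ∑ j, |E i| * |Δ i| * (|E j| * |Δ j|) := by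
        rw [dotProduct]
        apply Finset.sum_le_sum; intro i _
        rw [Matrix.mulVec, dotProduct, Finset.mul_sum]
        apply Finset.sum_le_sum; intro j _
        have hb : (K i j)^2 ≤ (Δ i)^2 * (Δ j)^2 := by
          have hh := psd_entry_sq_le K hK i j
          rwa [hKd i, hKd j] at hh
        have habs : |K i j| ≤ |Δ i| * |Δ j| := by
          nlinarith [abs_nonneg (K i j), abs_nonneg (Δ i), abs_nonneg (Δ j),
            sq_abs (K i j), sq_abs (Δ i), sq_abs (Δ j), mul_nonneg (abs_nonneg (Δ i)) (abs_nonneg (Δ j))]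
        calc E i * (K i j * E j) ≤ |E i * (K i j * E j)| := le_abs_self _
          _ = |E i| * |K i j| * |E j| := by rw [abs_mul, abs_mul]; ring
          _ ≤ |E i| * (|Δ i| * |Δ j|) * |E j| := by
              apply mul_le_mul_of_nonneg_right _ (abs_nonneg _)
              exact mul_le_mul_of_nonneg_left habs (abs_nonneg _)
          _ = |E i| * |Δ i| * (|E j| * |Δ j|) := by ring
      have h2 : ∑ i, ∑ j, |E i| * |Δ i| * (|E j| * |Δ j|)
          = (∑ i, |E i| * |Δ i|) ^ 2 := by
        rw [sq, Finset.sum_mul_sum]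
      have h3 : (∑ i, |E i| * |Δ i|) ^ 2 ≤ (∑ i, |E i|^2) * (∑ i, |Δ i|^2) :=
        Finset.sum_mul_sq_le_sq_mul_sq _ _ _
      have h4 : (∑ i, |E i|^2) = c := by simp [hc_def, sq_abs]
      have h5 : (∑ i, |Δ i|^2) = ∑ i, (Δ i)^2 := by simp [sq_abs]
      calc E ⬝ᵥ K.mulVec E ≤ (∑ i, |E i| * |Δ i|) ^ 2 := h1.trans_eq h2
        _ ≤ c * (∑ i, (Δ i)^2) := by rw [← h4, ← h5]; exact h3
        _ = (∑ i, (Δ i)^2) * c := mul_comm _ _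
    rw [hsc]
    have hmain : Real.sqrt (η * (E ⬝ᵥ K.mulVec E)) ≤ Real.sqrt (η * ∑ i, (Δ i)^2) * Real.sqrt c := by
      rw [← Real.sqrt_mul (by positivity)]
      apply Real.sqrt_le_sqrt
      calc η * (E ⬝ᵥ K.mulVec E) ≤ η * ((∑ i, (Δ i)^2) * c) :=
            mul_le_mul_of_nonneg_left key hη
        _ = η * (∑ i, (Δ i)^2) * c := by ring
    rw [div_le_div_iff₀ hc (by positivity)]
    calc Real.sqrt (η * (E ⬝ᵥ K.mulVec E)) * Real.sqrt c
        ≤ (Real.sqrt (η * ∑ i, (Δ i)^2) * Real.sqrt c) * Real.sqrt c :=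
          mul_le_mul_of_nonneg_right hmain (Real.sqrt_nonneg c)
      _ = Real.sqrt (η * ∑ i, (Δ i)^2) * (Real.sqrt c)^2 := by ring
      _ = Real.sqrt (η * ∑ i, (Δ i)^2) * c := by rw [hsc]
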